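/- Let n, N ∈ ℕ, let w ∈ ℝ^{n×N} be a weight matrix, and let μ^1,…,μ^N ∈ ℝⁿ be center vectors that are totally ordered with respect to the componentwise order on ℝⁿ (for every pair k, l, either μ^k_i ≤ μ^l_i for all i, or μ^l_i ≤ μ^k_i for all i). Fix l ∈ {1,…,N} and x ∈ ℝⁿ with x_i ≠ μ^k_i for all i ∈ {1,…,n} and all k ∈ {1,…,N}. Define, for each pair (l,k), v_max(l,k) ∈ ℝⁿ by v_max(l,k)_i = max{μ^l_i, μ^k_i}. Then the total approximation error Σ_{i=1}^n Σ_{k=1}^N α · (1 − λ_{α,μ^l_i}(x_i)) · w_{ik} · (Λ^α_{μ^l}(x) · Λ^α_{μ^k}(x) − Λ^α_{v_max(l,k)}(x)) converges to 0 as α → ∞. -/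

import Mathlib

open Filter Topology

/-- The logistic function with steepness `α` and center `μ`. -/
noncomputable def logistic (α μ x : ℝ) : ℝ := 1 / (1 + Real.exp (-α * (x - μ)))

/-- The multivariate conjunctive logistic function with center vector `v`. -/
noncomputable def mvLogistic {n : ℕ} (α : ℝ) (v x : Fin n → ℝ) : ℝ :=
  ∏ i, logistic α (v i) (x i)

lemma logistic_pos (α μ x : ℝ) : 0 < logistic α μ x := by
  unfold logistic; positivity

lemma logistic_le_one (α μ x : ℝ) : logistic α μ x ≤ 1 := by
  unfold logistic
  rw [div_le_one (by positivity)]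
  linarith [Real.exp_pos (-α * (x - μ))]

lemma one_sub_logistic_le (α μ x : ℝ) :
    1 - logistic α μ x ≤ Real.exp (-α * (x - μ)) := by
  unfold logistic
  have he : (0:ℝ) < 1 + Real.exp (-α * (x - μ)) := by positivity
  have h : 1 - 1 / (1 + Real.exp (-α * (x - μ)))
      = Real.exp (-α * (x - μ)) / (1 + Real.exp (-α * (x - μ))) := by
    field_simp
    ring
  rw [h]
  exact div_le_self (Real.exp_nonneg _) (by linarith [Real.exp_pos (-α * (x - μ))])

lemma logistic_le_exp (α μ x : ℝ) : logistic α μ x ≤ Real.exp (α * (x - μ)) := by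
  unfold logistic
  rw [div_le_iff₀ (by positivity)]
  have h : Real.exp (α * (x - μ)) * Real.exp (-α * (x - μ)) = 1 := by
    rw [← Real.exp_add]; ring_nf; exact Real.exp_zero
  nlinarith [Real.exp_pos (α * (x - μ)), Real.exp_pos (-α * (x - μ))]

lemma mvLogistic_nonneg {n : ℕ} (α : ℝ) (v x : Fin n → ℝ) : 0 ≤ mvLogistic α v x :=
  Finset.prod_nonneg fun i _ => (logistic_pos α (v i) (x i)).le

lemma mvLogistic_le_one {n : ℕ} (α : ℝ) (v x : Fin n → ℝ) : mvLogistic α v x ≤ 1 :=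
  Finset.prod_le_one (fun i _ => (logistic_pos α (v i) (x i)).le)
    (fun i _ => logistic_le_one α (v i) (x i))

lemma mvLogistic_le {n : ℕ} (α : ℝ) (v x : Fin n → ℝ) (i : Fin n) :
    mvLogistic α v x ≤ logistic α (v i) (x i) := by
  unfold mvLogistic
  rw [← Finset.prod_erase_mul _ _ (Finset.mem_univ i)]
  have h1 : ∏ j ∈ Finset.univ.erase i, logistic α (v j) (x j) ≤ 1 :=
    Finset.prod_le_one (fun _ _ => (logistic_pos _ _ _).le)
      (fun _ _ => logistic_le_one _ _ _)
  have h2 : (0:ℝ) ≤ ∏ j ∈ Finset.univ.erase i, logistic α (v j) (x j) :=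
    Finset.prod_nonneg fun j _ => (logistic_pos α (v j) (x j)).le
  nlinarith [logistic_pos α (v i) (x i)]

lemma tendsto_mul_exp_aux {δ : ℝ} (hδ : 0 < δ) :
    Tendsto (fun α : ℝ => α * Real.exp (-δ * α)) atTop (𝓝 0) := by
  have h1 : Tendsto (fun t : ℝ => t * Real.exp (-t)) atTop (𝓝 0) := by
    simpa using Real.tendsto_pow_mul_exp_neg_atTop_nhds_zero 1
  have h2 : Tendsto (fun α : ℝ => δ * α) atTop atTop :=
    Tendsto.const_mul_atTop hδ tendsto_id
  have h3 := (h1.comp h2).const_mul (1/δ)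
  rw [mul_zero] at h3
  have heq : (fun α : ℝ => α * Real.exp (-δ * α))
      = fun α : ℝ => (1/δ) * ((δ * α) * Real.exp (-(δ * α))) := by
    funext α
    rw [neg_mul]
    field_simp
  rw [heq]
  exact h3

lemma term_tendsto {n : ℕ} (μl μk x : Fin n → ℝ) (i : Fin n) (W : ℝ)
    (hord : (∀ j, μk j ≤ μl j) ∨ (∀ j, μl j ≤ μk j))
    (hxl : x i ≠ μl i) :
    Tendsto (fun α : ℝ => α * (1 - logistic α (μl i) (x i)) * W *
      (mvLogistic α μl x * mvLogistic α μk x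
        - mvLogistic α (fun j => max (μl j) (μk j)) x)) atTop (𝓝 0) := by
  set δ := |x i - μl i| with hδdef
  have hδ : 0 < δ := abs_pos.mpr (sub_ne_zero.mpr hxl)
  have hg : Tendsto (fun α : ℝ => 2 * |W| * (α * Real.exp (-δ * α))) atTop (𝓝 0) := by
    have := (tendsto_mul_exp_aux hδ).const_mul (2 * |W|)
    simpa using this
  apply squeeze_zero_norm' _ hg
  filter_upwards [eventually_ge_atTop (0:ℝ)] with α hα
  set p := mvLogistic α μl x with hpdef
  set q := mvLogistic α μk x with hqdef
  set r := mvLogistic α (fun j => max (μl j) (μk j)) x with hrdef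
  set lam := logistic α (μl i) (x i) with hlamdef
  have hp0 : 0 ≤ p := mvLogistic_nonneg _ _ _
  have hp1 : p ≤ 1 := mvLogistic_le_one _ _ _
  have hq0 : 0 ≤ q := mvLogistic_nonneg _ _ _
  have hq1 : q ≤ 1 := mvLogistic_le_one _ _ _
  have hr0 : 0 ≤ r := mvLogistic_nonneg _ _ _
  have hr1 : r ≤ 1 := mvLogistic_le_one _ _ _
  have hl0 : 0 < lam := logistic_pos _ _ _
  have hl1 : lam ≤ 1 := logistic_le_one _ _ _
  have key : (1 - lam) * |p * q - r| ≤ 2 * Real.exp (-δ * α) := by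
    rcases lt_or_gt_of_ne hxl with hlt | hgt
    · -- x i < μl i
      have hδeq : δ = μl i - x i := by
        rw [hδdef, abs_of_neg (by linarith : x i - μl i < 0)]; ring
      rcases hord with hkl | hlk
      · -- μk ≤ μl, so max = μl, r = p
        have hre : r = p := by
          rw [hrdef, hpdef]
          congr 1
          funext j
          exact max_eq_left (hkl j)
        have habs : |p * q - r| ≤ p := by
          rw [hre]
          rw [abs_le]
          constructor <;> nlinarith
        have hple : p ≤ Real.exp (-δ * α) := by
          calc p ≤ lam := by rw [hpdef, hlamdef]; exact mvLogistic_le α μl x i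
            _ ≤ Real.exp (α * (x i - μl i)) := logistic_le_exp _ _ _
            _ = Real.exp (-δ * α) := by rw [hδeq]; congr 1; ring
        nlinarith [abs_nonneg (p * q - r), Real.exp_pos (-δ * α)]
      · -- μl ≤ μk, so max = μk, r = q
        have hre : r = q := by
          rw [hrdef, hqdef]
          congr 1
          funext j
          exact max_eq_right (hlk j)
        have habs : |p * q - r| ≤ q := by
          rw [hre]
          rw [abs_le]
          constructor <;> nlinarith
        have hqle : q ≤ Real.exp (-δ * α) := by
          calc q ≤ logistic α (μk i) (x i) := by rw [hqdef]; exact mvLogistic_le α μk x i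
            _ ≤ Real.exp (α * (x i - μk i)) := logistic_le_exp _ _ _
            _ ≤ Real.exp (α * (x i - μl i)) := by
                apply Real.exp_le_exp.mpr
                have := hlk i
                nlinarith
            _ = Real.exp (-δ * α) := by rw [hδeq]; congr 1; ring
        nlinarith [abs_nonneg (p * q - r), Real.exp_pos (-δ * α)]
    · -- x i > μl i
      have hδeq : δ = x i - μl i := by
        rw [hδdef, abs_of_pos (by linarith : (0:ℝ) < x i - μl i)]
      have h1s : 1 - lam ≤ Real.exp (-δ * α) := by
        calc 1 - lam ≤ Real.exp (-α * (x i - μl i)) := one_sub_logistic_le _ _ _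
          _ = Real.exp (-δ * α) := by rw [hδeq]; congr 1; ring
      have habs : |p * q - r| ≤ 1 := by
        rw [abs_le]
        constructor <;> nlinarith
      nlinarith [abs_nonneg (p * q - r), Real.exp_pos (-δ * α),
        mul_le_mul h1s habs (abs_nonneg (p * q - r)) (Real.exp_nonneg (-δ * α))]
  rw [Real.norm_eq_abs, abs_mul, abs_mul, abs_mul, abs_of_nonneg hα,
    abs_of_nonneg (by linarith : (0:ℝ) ≤ 1 - lam)]
  have hmul := mul_le_mul_of_nonneg_left key (mul_nonneg hα (abs_nonneg W))
  nlinarith [abs_nonneg (p * q - r), abs_nonneg W, Real.exp_pos (-δ * α)]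

/-- **finite approximate closure of the SILL dictionary.**
For a totally ordered (componentwise) family of centers `μ¹,…,μᴺ`, weights `w`, a fixed
dictionary index `l`, and a point `x` avoiding all center coordinates, the total error
made by replacing each product `Λ^α_{μˡ} Λ^α_{μᵏ}` with `Λ^α_{v_max(l,k)}` in the
expression for `d/dt Λ^α_{μˡ}` converges to `0` as the steepness `α → ∞`. -/
theorem sill_finite_approximate_closure {n N : ℕ} (w : Fin n → Fin N → ℝ)
    (μ : Fin N → Fin n → ℝ)
    (horder : ∀ k l : Fin N, (∀ i, μ k i ≤ μ l i) ∨ (∀ i, μ l i ≤ μ k i))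
    (l : Fin N) (x : Fin n → ℝ) (hx : ∀ (i : Fin n) (k : Fin N), x i ≠ μ k i) :
    Tendsto (fun α : ℝ =>
        ∑ i, ∑ k, α * (1 - logistic α (μ l i) (x i)) * w i k
          * (mvLogistic α (μ l) x * mvLogistic α (μ k) x
              - mvLogistic α (fun i => max (μ l i) (μ k i)) x))
      atTop (𝓝 0) := by
  have h := tendsto_finset_sum (Finset.univ : Finset (Fin n)) (fun i _ =>
    tendsto_finset_sum (Finset.univ : Finset (Fin N)) (fun k _ =>
      term_tendsto (μ l) (μ k) x i (w i k) (horder k l) (hx i l)))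
  simpa using h
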